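/- Assume (B1)–(B3), that F := {z ∈ H : g(z) ∈ −K} is nonempty, and let λ > 0, σ ∈ (0, 1/√2], c̃ > 0, an integer k₀ ≥ 0, z_{k₀} ∈ H, p_{k₀} ∈ ℝ^ℓ. For j = k₀+1, ..., k with k ≥ k₀+2, suppose (z_j, v_j, ε_j) satisfies the prox condition with data (λ, σ, c̃, z_{j-1}, p_{j-1}), p_j := Π_{K*}(p_{j-1} + c̃ g(z_j)), r_j := v_j + z_{j-1} − z_j, and suppose ‖p_j‖ ≤ C for all j = k₀, ..., k for some C ≥ 0. Define Δ_k := [L_{c̃}(z_{k₀+1};p_{k₀+1}) − L_{c̃}(z_k;p_k)]/(k − k₀ − 1). Then: (i) min_{k₀+2 ≤ j ≤ k} ‖r_j‖² ≤ (2λ/(1−σ²))·(Δ_k + 4C²/c̃); and (ii) Δ_k ≤ (R_φ + 9C²/(2c̃))/(k − k₀ − 1), where R_φ := φ* − φ_* + D_h²/λ with φ* := inf{f(u)+h(u) : u ∈ F} and φ_* := inf{f(u)+h(u) : u ∈ ℝ^n}. -/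

import Mathlib

open RealInnerProductSpace Pointwise

/-- The dual cone of a set in a real inner product space. -/
def dualCone {F : Type*} [NormedAddCommGroup F] [InnerProductSpace ℝ F] (K : Set F) : Set F :=
  {y | ∀ x ∈ K, 0 ≤ ⟪y, x⟫}

/-- `p` is the Euclidean projection of `x` onto `S`. -/
def IsProjOn {F : Type*} [NormedAddCommGroup F] [InnerProductSpace ℝ F]
    (S : Set F) (x p : F) : Prop :=
  p ∈ S ∧ ∀ y ∈ S, dist x p ≤ dist x y

/-- `g` is `K`-convex. -/
def KConvex {E F : Type*} [NormedAddCommGroup E] [InnerProductSpace ℝ E]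
    [NormedAddCommGroup F] [InnerProductSpace ℝ F] (K : Set F) (g : E → F) : Prop :=
  ∀ z z' : E, ∀ t : ℝ, t ∈ Set.Icc (0 : ℝ) 1 →
    g (t • z' + (1 - t) • z) - t • g z' - (1 - t) • g z ∈ -K

/-- The ε-subdifferential at `z` of a proper extended-real-valued function represented by
its effective domain `D` and its real values `ψ` on `D` (the function equals `+∞` off `D`). -/
def epsSubdiff {E : Type*} [NormedAddCommGroup E] [InnerProductSpace ℝ E]
    (D : Set E) (ψ : E → ℝ) (ε : ℝ) (z : E) : Set E :=
  {u | ∀ z' ∈ D, ψ z + ⟪u, z' - z⟫ - ε ≤ ψ z'}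

/-- The augmented Lagrangian `L_c(z;p)`; the proper closed convex function `h` is represented
by its real values on its effective domain `H`. -/
noncomputable def AugLag {E F : Type*} [NormedAddCommGroup E] [InnerProductSpace ℝ E]
    [NormedAddCommGroup F] [InnerProductSpace ℝ F]
    (K : Set F) (f h : E → ℝ) (g : E → F) (c : ℝ) (z : E) (p : F) : ℝ :=
  f z + h z + (1 / (2 * c)) * ((Metric.infDist (p + c • g z) (-K)) ^ 2 - ‖p‖ ^ 2)

section Aux
variable {F : Type*} [NormedAddCommGroup F] [InnerProductSpace ℝ F]

lemma dualCone_convex (K : Set F) : Convex ℝ (dualCone K) := by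
  intro a ha b hb sa sb hsa hsb _
  intro x hx
  have h1 := ha x hx
  have h2 := hb x hx
  have hrw : ⟪sa • a + sb • b, x⟫ = sa * ⟪a, x⟫ + sb * ⟪b, x⟫ := by
    rw [inner_add_left, real_inner_smul_left, real_inner_smul_left]
  show (0:ℝ) ≤ ⟪sa • a + sb • b, x⟫
  rw [hrw]
  exact add_nonneg (mul_nonneg hsa h1) (mul_nonneg hsb h2)

lemma zero_mem_dualCone (K : Set F) : (0 : F) ∈ dualCone K := by
  intro x _; rw [inner_zero_left]

lemma smul_mem_dualCone {K : Set F} {p : F} (hp : p ∈ dualCone K) {t : ℝ} (ht : 0 ≤ t) :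
    t • p ∈ dualCone K := by
  intro x hx
  rw [real_inner_smul_left]
  exact mul_nonneg ht (hp x hx)

lemma isProjOn_inner_le {S : Set F} (hS : Convex ℝ S) {x p : F} (hp : IsProjOn S x p)
    {y : F} (hy : y ∈ S) : ⟪x - p, y - p⟫ ≤ 0 := by
  obtain ⟨hpS, hmin⟩ := hp
  by_contra hlt
  push_neg at hlt
  set c : ℝ := ⟪x - p, y - p⟫ with hc
  set d : ℝ := ‖y - p‖ ^ 2 with hd
  have hd0 : 0 < d := by
    have hyp : y - p ≠ 0 := by
      intro h0
      rw [hc, h0, inner_zero_right] at hlt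
      exact lt_irrefl 0 hlt
    have : 0 < ‖y - p‖ := norm_pos_iff.mpr hyp
    rw [hd]; positivity
  set t : ℝ := min 1 (c / d) with htdef
  have ht0 : 0 < t := lt_min one_pos (div_pos hlt hd0)
  have ht1 : t ≤ 1 := min_le_left _ _
  have hmem : p + t • (y - p) ∈ S := by
    have := hS hpS hy (by linarith : (0:ℝ) ≤ 1 - t) ht0.le (by ring)
    have heq : (1 - t) • p + t • y = p + t • (y - p) := by
      rw [smul_sub, sub_smul, one_smul]; abel
    rwa [heq] at this
  have hdist := hmin _ hmem
  rw [dist_eq_norm, dist_eq_norm] at hdist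
  have hveq : x - (p + t • (y - p)) = (x - p) - t • (y - p) := by abel
  rw [hveq] at hdist
  have h2 : ‖x - p‖ ^ 2 ≤ ‖x - p - t • (y - p)‖ ^ 2 :=
    pow_le_pow_left₀ (norm_nonneg _) hdist 2
  have hexp : ‖x - p - t • (y - p)‖ ^ 2 = ‖x - p‖ ^ 2 - 2 * (t * c) + t ^ 2 * d := by
    rw [norm_sub_sq_real, real_inner_smul_right, norm_smul, mul_pow]
    rw [Real.norm_eq_abs, sq_abs, hd]
  have hkey : 2 * c ≤ t * d := by
    rw [hexp] at h2
    have h3 : 2 * (t * c) ≤ t ^ 2 * d := by linarith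
    have h4 : t * (2 * c) ≤ t * (t * d) := by nlinarith
    exact le_of_mul_le_mul_left h4 ht0
  have htd : t * d ≤ c := by
    calc t * d ≤ (c / d) * d := mul_le_mul_of_nonneg_right (min_le_right _ _) hd0.le
    _ = c := div_mul_cancel₀ c hd0.ne'
  linarith

end Aux

section Aux2
variable {F : Type*} [NormedAddCommGroup F] [InnerProductSpace ℝ F]

/-- The convex cone structure on `K`. -/
def coneOf (K : Set F) (hKcvx : Convex ℝ K)
    (hKcone : ∀ t : ℝ, 0 < t → ∀ x ∈ K, t • x ∈ K) : ConvexCone ℝ F where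
  carrier := K
  smul_mem' := fun c hc x hx => hKcone c hc x hx
  add_mem' := fun x hx y hy => by
    have hhalf := hKcvx hx hy (by norm_num : (0:ℝ) ≤ 1/2) (by norm_num : (0:ℝ) ≤ 1/2)
      (by norm_num)
    have h2 := hKcone 2 (by norm_num) _ hhalf
    have : (2:ℝ) • ((1/2 : ℝ) • x + (1/2 : ℝ) • y) = x + y := by
      rw [smul_add, smul_smul, smul_smul]
      norm_num
    rwa [this] at h2

lemma proj_ortho {K : Set F} {q p : F} (hp : IsProjOn (dualCone K) q p) :
    ⟪q - p, p⟫ = 0 := by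
  have h0 := isProjOn_inner_le (dualCone_convex K) hp (zero_mem_dualCone K)
  have h2 := isProjOn_inner_le (dualCone_convex K) hp
    (smul_mem_dualCone hp.1 (by norm_num : (0:ℝ) ≤ 2))
  rw [zero_sub, inner_neg_right] at h0
  have h2' : (2:ℝ) • p - p = p := by
    rw [two_smul]; abel
  rw [h2'] at h2
  linarith

lemma proj_resid_nonpos {K : Set F} {q p : F} (hp : IsProjOn (dualCone K) q p)
    {y : F} (hy : y ∈ dualCone K) : ⟪q - p, y⟫ ≤ 0 := by
  have h := isProjOn_inner_le (dualCone_convex K) hp hy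
  rw [inner_sub_right] at h
  have h0 := proj_ortho hp
  linarith

lemma proj_resid_mem_neg [FiniteDimensional ℝ F] {K : Set F} (hKne : K.Nonempty)
    (hKcl : IsClosed K) (hKcvx : Convex ℝ K)
    (hKcone : ∀ t : ℝ, 0 < t → ∀ x ∈ K, t • x ∈ K)
    {q p : F} (hp : IsProjOn (dualCone K) q p) : q - p ∈ -K := by
  by_contra hn
  have hb : -(q - p) ∉ coneOf K hKcvx hKcone := by
    intro hmem
    exact hn (Set.mem_neg.mpr hmem)
  have h0 : (0:F) ∈ K := by
    obtain ⟨x, hx⟩ := hKne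
    have ht : Filter.Tendsto (fun t : ℝ => t • x) (nhdsWithin 0 (Set.Ioi 0)) (nhds 0) := by
      have := (Filter.tendsto_id (x := nhds (0:ℝ))).smul_const x
      simp only [id, zero_smul] at this
      exact this.mono_left nhdsWithin_le_nhds
    exact hKcl.mem_of_tendsto ht
      (eventually_nhdsWithin_of_forall fun t htt => hKcone t htt x hx)
  let P : ProperCone ℝ F :=
    { toSubmodule := (coneOf K hKcvx hKcone).toPointedCone h0, isClosed' := hKcl }
  have hbP : -(q - p) ∉ P := hb
  obtain ⟨y, hy1, hy2⟩ := P.hyperplane_separation' hbP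
  have hyd : y ∈ dualCone K := by
    intro x hx
    rw [real_inner_comm]
    exact hy1 x hx
  have hle := proj_resid_nonpos hp hyd
  rw [inner_neg_left] at hy2
  linarith

lemma proj_dist_eq [FiniteDimensional ℝ F] {K : Set F} (hKne : K.Nonempty)
    (hKcl : IsClosed K) (hKcvx : Convex ℝ K)
    (hKcone : ∀ t : ℝ, 0 < t → ∀ x ∈ K, t • x ∈ K)
    {q p : F} (hp : IsProjOn (dualCone K) q p) : Metric.infDist q (-K) = ‖p‖ := by
  have hmem := proj_resid_mem_neg hKne hKcl hKcvx hKcone hp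
  have hle : Metric.infDist q (-K) ≤ ‖p‖ := by
    have := Metric.infDist_le_dist_of_mem (x := q) hmem
    rwa [dist_eq_norm, show q - (q - p) = p by abel] at this
  have hge : ‖p‖ ≤ Metric.infDist q (-K) := by
    by_contra hlt
    push_neg at hlt
    obtain ⟨y, hy, hdy⟩ := (Metric.infDist_lt_iff ⟨q - p, hmem⟩).mp hlt
    have hyK : -y ∈ K := Set.mem_neg.mp hy
    have hpy : ⟪p, y⟫ ≤ 0 := by
      have := hp.1 (-y) hyK
      rwa [inner_neg_right, neg_nonneg] at this
    have hpq : ⟪p, q⟫ = ‖p‖ ^ 2 := by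
      have h0 := proj_ortho hp
      rw [inner_sub_left] at h0
      rw [real_inner_comm]
      rw [real_inner_self_eq_norm_sq] at h0
      linarith
    have h1 : ‖p‖ ^ 2 ≤ ⟪p, q - y⟫ := by
      rw [inner_sub_right]; linarith
    have h2 : ⟪p, q - y⟫ ≤ ‖p‖ * ‖q - y‖ := real_inner_le_norm p (q - y)
    rw [dist_eq_norm] at hdy
    nlinarith [norm_nonneg p, norm_nonneg (q - y)]
  linarith

lemma key_ineq {E : Type*} [NormedAddCommGroup E] [InnerProductSpace ℝ E]
    (a b v : E) (ε : ℝ) (hε : 0 ≤ ε) (hc : ‖v‖ ^ 2 + 2 * ε ≤ (1/2) * ‖v - b‖ ^ 2) :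
    (1/2) * ‖a - b‖ ^ 2 + ⟪v - b, b - a⟫ + ε ≤ ‖a‖ ^ 2 := by
  have h1 : ‖a + v‖ ^ 2 = ‖a‖ ^ 2 + 2 * ⟪a, v⟫ + ‖v‖ ^ 2 := norm_add_sq_real a v
  have h2 : ‖a - b‖ ^ 2 = ‖a‖ ^ 2 - 2 * ⟪a, b⟫ + ‖b‖ ^ 2 := norm_sub_sq_real a b
  have h3 : ‖v - b‖ ^ 2 = ‖v‖ ^ 2 - 2 * ⟪v, b⟫ + ‖b‖ ^ 2 := norm_sub_sq_real v b
  have h4 : ⟪v - b, b - a⟫ = ⟪v, b⟫ - ⟪v, a⟫ - ‖b‖ ^ 2 + ⟪b, a⟫ := by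
    rw [inner_sub_left, inner_sub_right, inner_sub_right, real_inner_self_eq_norm_sq]
    ring
  have h5 : (0:ℝ) ≤ ‖a + v‖ ^ 2 := by positivity
  have hab : ⟪a, b⟫ = ⟪b, a⟫ := (real_inner_comm b a)
  have hav : ⟪a, v⟫ = ⟪v, a⟫ := (real_inner_comm v a)
  linarith

end Aux2

section Aux3
variable {E G : Type*} [NormedAddCommGroup E] [InnerProductSpace ℝ E]
  [NormedAddCommGroup G] [InnerProductSpace ℝ G]

lemma auglag_shift [FiniteDimensional ℝ G] {K : Set G} (hKne : K.Nonempty)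
    (hKcl : IsClosed K) (hKcvx : Convex ℝ K)
    (hKcone : ∀ t : ℝ, 0 < t → ∀ x ∈ K, t • x ∈ K)
    (f h : E → ℝ) (g : E → G) {ct : ℝ} (hct : 0 < ct) (zz : E) {p0 p1 : G}
    (hproj : IsProjOn (dualCone K) (p0 + ct • g zz) p1) :
    AugLag K f h g ct zz p1 ≤ AugLag K f h g ct zz p0 + ‖p1 - p0‖ ^ 2 / ct := by
  have hdq : Metric.infDist (p0 + ct • g zz) (-K) = ‖p1‖ :=
    proj_dist_eq hKne hKcl hKcvx hKcone hproj
  have hmem : (p0 + ct • g zz) - p1 ∈ -K := proj_resid_mem_neg hKne hKcl hKcvx hKcone hproj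
  set d1 : ℝ := Metric.infDist (p1 + ct • g zz) (-K) with hd1def
  have hd1 : d1 ≤ ‖p1 + p1 - p0‖ := by
    have := Metric.infDist_le_dist_of_mem (x := p1 + ct • g zz) hmem
    rwa [dist_eq_norm, show p1 + ct • g zz - (p0 + ct • g zz - p1) = p1 + p1 - p0 by abel]
      at this
  have hd1sq : d1 ^ 2 ≤ ‖p1 + p1 - p0‖ ^ 2 :=
    pow_le_pow_left₀ Metric.infDist_nonneg hd1 2
  have hnorm : ‖p1 + p1 - p0‖ ^ 2 - 2 * ‖p1‖ ^ 2 + ‖p0‖ ^ 2 = 2 * ‖p1 - p0‖ ^ 2 := by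
    have e1 : ‖p1 + (p1 - p0)‖ ^ 2 = ‖p1‖ ^ 2 + 2 * ⟪p1, p1 - p0⟫ + ‖p1 - p0‖ ^ 2 :=
      norm_add_sq_real p1 (p1 - p0)
    have e2 : ‖p1 - p0‖ ^ 2 = ‖p1‖ ^ 2 - 2 * ⟪p1, p0⟫ + ‖p0‖ ^ 2 := norm_sub_sq_real p1 p0
    have e3 : ⟪p1, p1 - p0⟫ = ‖p1‖ ^ 2 - ⟪p1, p0⟫ := by
      rw [inner_sub_right, real_inner_self_eq_norm_sq]
    rw [show p1 + p1 - p0 = p1 + (p1 - p0) by abel, e1, e3]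
    linarith
  have hscalar : d1 ^ 2 - ‖p1‖ ^ 2 ≤
      (Metric.infDist (p0 + ct • g zz) (-K)) ^ 2 - ‖p0‖ ^ 2 + 2 * ‖p1 - p0‖ ^ 2 := by
    rw [hdq]
    linarith
  have hcpos : (0:ℝ) ≤ 1 / (2 * ct) := by positivity
  have hmono := mul_le_mul_of_nonneg_left hscalar hcpos
  have hring : (1 / (2 * ct)) * ((Metric.infDist (p0 + ct • g zz) (-K)) ^ 2 - ‖p0‖ ^ 2
      + 2 * ‖p1 - p0‖ ^ 2) = (1 / (2 * ct)) * ((Metric.infDist (p0 + ct • g zz) (-K)) ^ 2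
      - ‖p0‖ ^ 2) + ‖p1 - p0‖ ^ 2 / ct := by
    field_simp
  simp only [AugLag]
  rw [hring] at hmono
  linarith

lemma auglag_lower {K : Set G} (f h : E → ℝ) (g : E → G) {ct : ℝ} (hct : 0 < ct)
    (zz : E) (p : G) : f zz + h zz - ‖p‖ ^ 2 / (2 * ct) ≤ AugLag K f h g ct zz p := by
  simp only [AugLag]
  have h0 : (0:ℝ) ≤ (Metric.infDist (p + ct • g zz) (-K)) ^ 2 := by positivity
  have hcpos : (0:ℝ) ≤ 1 / (2 * ct) := by positivity
  have hmono := mul_le_mul_of_nonneg_left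
    (show (0:ℝ) - ‖p‖ ^ 2 ≤ (Metric.infDist (p + ct • g zz) (-K)) ^ 2 - ‖p‖ ^ 2 by linarith)
    hcpos
  have hring : (1 / (2 * ct)) * ((0:ℝ) - ‖p‖ ^ 2) = -(‖p‖ ^ 2 / (2 * ct)) := by ring
  rw [hring] at hmono
  linarith

lemma auglag_feas {K : Set G} (f h : E → ℝ) (g : E → G) {ct : ℝ} (hct : 0 < ct)
    {u : E} (hgu : ct • g u ∈ -K) (p : G) : AugLag K f h g ct u p ≤ f u + h u := by
  have hd : Metric.infDist (p + ct • g u) (-K) ≤ ‖p‖ := by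
    have := Metric.infDist_le_dist_of_mem (x := p + ct • g u) hgu
    rwa [dist_eq_norm, show p + ct • g u - ct • g u = p by abel] at this
  have hd2 : (Metric.infDist (p + ct • g u) (-K)) ^ 2 ≤ ‖p‖ ^ 2 :=
    pow_le_pow_left₀ Metric.infDist_nonneg hd 2
  have hcpos : (0:ℝ) ≤ 1 / (2 * ct) := by positivity
  simp only [AugLag]
  have := mul_nonpos_of_nonneg_of_nonpos hcpos
    (show (Metric.infDist (p + ct • g u) (-K)) ^ 2 - ‖p‖ ^ 2 ≤ 0 by linarith)
  linarith

end Aux3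

section Aux4
variable {E : Type*} [NormedAddCommGroup E] [InnerProductSpace ℝ E]

/-- The key inequality controlling the inexactness terms in the prox subproblem. -/
lemma key_ineq' (u z0 z1 v : E) (ε : ℝ) (hε : 0 ≤ ε)
    (hc : ‖v‖ ^ 2 + 2 * ε ≤ (1/2) * ‖v + z0 - z1‖ ^ 2) :
    (1/2) * ‖u - z0‖ ^ 2 - (1/2) * ‖z1 - z0‖ ^ 2 + ⟪v, z1 - u⟫ + ε ≤ ‖u - z0‖ ^ 2 := by
  have h1 : ‖u - z0 + v‖ ^ 2 = ‖u - z0‖ ^ 2 + 2 * ⟪u - z0, v⟫ + ‖v‖ ^ 2 :=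
    norm_add_sq_real _ _
  have h2 : ‖v + z0 - z1‖ ^ 2 = ‖v‖ ^ 2 - 2 * ⟪v, z1 - z0⟫ + ‖z1 - z0‖ ^ 2 := by
    rw [show v + z0 - z1 = v - (z1 - z0) by abel]
    exact norm_sub_sq_real _ _
  have h3 : ⟪v, z1 - u⟫ = ⟪v, z1 - z0⟫ - ⟪v, u - z0⟫ := by
    rw [← inner_sub_right]
    congr 1
    abel
  have h4 : ⟪u - z0, v⟫ = ⟪v, u - z0⟫ := real_inner_comm _ _
  have h5 : (0:ℝ) ≤ ‖u - z0 + v‖ ^ 2 := by positivity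
  linarith

end Aux4

set_option maxHeartbeats 2000000 in
/-- bounds on the residuals and on the averaged augmented Lagrangian decrease
within a cycle of NL-IAPIAL (Lemma 4.6 of the paper).  Steps `j = k₀+1, …, k` all use the
same penalty parameter `c̃`. -/
theorem cycle_residual_bounds
    {E F : Type*}
    [NormedAddCommGroup E] [InnerProductSpace ℝ E] [FiniteDimensional ℝ E]
    [NormedAddCommGroup F] [InnerProductSpace ℝ F] [FiniteDimensional ℝ F]
    -- K is a nonempty closed convex cone
    (K : Set F) (hKne : K.Nonempty) (hKcl : IsClosed K) (hKcvx : Convex ℝ K)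
    (hKcone : ∀ t : ℝ, 0 < t → ∀ x ∈ K, t • x ∈ K)
    -- (B1): h proper closed convex, K_h-Lipschitz on its compact domain H of diameter ≤ Dh
    (H : Set E) (h : E → ℝ) (Kh Dh : ℝ) (hKh : 0 < Kh) (hDh0 : 0 < Dh)
    (hHne : H.Nonempty) (hHcpt : IsCompact H) (hHcvx : Convex ℝ H)
    (hhcvx : ConvexOn ℝ H h)
    (hhlip : ∀ x ∈ H, ∀ y ∈ H, |h x - h y| ≤ Kh * ‖x - y‖)
    (hDh : ∀ x ∈ H, ∀ y ∈ H, ‖x - y‖ ≤ Dh)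
    -- (B2): f differentiable on H with lower curvature m_f and L_f-Lipschitz gradient
    (f : E → ℝ) (f' : E → E) (mf Lf : ℝ) (hmf : 0 < mf) (hLf : 0 < Lf)
    (hfdiff : ∀ z ∈ H, HasGradientAt f (f' z) z)
    (hflow : ∀ z ∈ H, ∀ z' ∈ H, -(mf / 2) * ‖z' - z‖ ^ 2 ≤ f z' - f z - ⟪f' z, z' - z⟫)
    (hflip : ∀ z ∈ H, ∀ z' ∈ H, ‖f' z' - f' z‖ ≤ Lf * ‖z' - z‖)
    -- (B3): g K-convex and differentiable with L_g-Lipschitz derivative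
    (g : E → F) (g' : E → (E →L[ℝ] F)) (Lg : ℝ) (hLg : 0 < Lg)
    (hgdiff : ∀ z, HasFDerivAt g (g' z) z) (hgK : KConvex K g)
    (hglip : ∀ z z' : E, ‖g' z' - g' z‖ ≤ Lg * ‖z' - z‖)
    -- bounds B_g⁽⁰⁾ and B_g⁽¹⁾
    (Bg0 Bg1 : ℝ) (hBg0 : ∀ z ∈ H, ‖g z‖ ≤ Bg0) (hBg1 : ∀ z ∈ H, ‖g' z‖ ≤ Bg1)
    -- the feasible set is nonempty
    (hFne : {u | u ∈ H ∧ g u ∈ -K}.Nonempty)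
    -- algorithm parameters
    (lam σ ct : ℝ) (hlam : 0 < lam) (hσ0 : 0 < σ) (hσ1 : σ ≤ 1 / Real.sqrt 2) (hct : 0 < ct)
    (k₀ k : ℕ) (hk : k₀ + 2 ≤ k)
    -- iterates
    (z : ℕ → E) (p : ℕ → F) (v : ℕ → E) (ε : ℕ → ℝ)
    (hzH : ∀ j : ℕ, k₀ ≤ j → j ≤ k → z j ∈ H)
    (hε : ∀ j : ℕ, k₀ + 1 ≤ j → j ≤ k → 0 ≤ ε j)
    -- prox condition at every step j ∈ {k₀+1, …, k}, with data (λ, σ, c̃, z (j-1), p (j-1))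
    (hv : ∀ j : ℕ, k₀ + 1 ≤ j → j ≤ k → v j ∈ epsSubdiff H
      (fun u => lam * AugLag K f h g ct u (p (j - 1)) + (1 / 2) * ‖u - z (j - 1)‖ ^ 2)
      (ε j) (z j))
    (hvineq : ∀ j : ℕ, k₀ + 1 ≤ j → j ≤ k → ‖v j‖ ^ 2 + 2 * ε j ≤
      (σ / Real.sqrt (lam * (Lf + Lg * ‖p (j - 1)‖ + ct * (Bg0 * Lg + Bg1 ^ 2)) + 1)) ^ 2 *
        ‖v j + z (j - 1) - z j‖ ^ 2)
    -- multiplier update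
    (hp : ∀ j : ℕ, k₀ + 1 ≤ j → j ≤ k →
      IsProjOn (dualCone K) (p (j - 1) + ct • g (z j)) (p j))
    -- boundedness of the multipliers
    (C : ℝ) (hC : 0 ≤ C) (hpC : ∀ j : ℕ, k₀ ≤ j → j ≤ k → ‖p j‖ ≤ C)
    -- the quantities Δ_k and R_φ
    (Δ : ℝ) (hΔ : Δ = (AugLag K f h g ct (z (k₀ + 1)) (p (k₀ + 1))
      - AugLag K f h g ct (z k) (p k)) / ((k : ℝ) - (k₀ : ℝ) - 1))
    (Rφ : ℝ) (hRφ : Rφ = sInf ((fun u => f u + h u) '' {u | u ∈ H ∧ g u ∈ -K})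
      - sInf ((fun u => f u + h u) '' H) + Dh ^ 2 / lam) :
    -- conclusions
    (∃ j : ℕ, k₀ + 2 ≤ j ∧ j ≤ k ∧
      ‖v j + z (j - 1) - z j‖ ^ 2 ≤ (2 * lam / (1 - σ ^ 2)) * (Δ + 4 * C ^ 2 / ct)) ∧
    Δ ≤ (Rφ + 9 * C ^ 2 / (2 * ct)) / ((k : ℝ) - (k₀ : ℝ) - 1) := by
  -- basic numeric facts
  set n : ℕ := k - (k₀ + 1) with hndef
  have hn1 : 1 ≤ n := by omega
  have hncast : (n : ℝ) = (k : ℝ) - (k₀ : ℝ) - 1 := by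
    rw [hndef, Nat.cast_sub (by omega)]
    push_cast
    ring
  have hnpos : (0 : ℝ) < (k : ℝ) - (k₀ : ℝ) - 1 := by
    rw [← hncast]
    exact_mod_cast hn1
  have hσ2 : σ ^ 2 ≤ 1 / 2 := by
    have hs2 : (1 / Real.sqrt 2) ^ 2 = 1 / 2 := by
      rw [div_pow, one_pow, Real.sq_sqrt (by norm_num : (0:ℝ) ≤ 2)]
    have := pow_le_pow_left₀ hσ0.le hσ1 2
    rwa [hs2] at this
  have h1σ : 0 < 1 - σ ^ 2 := by linarith
  have hBg0n : 0 ≤ Bg0 := by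
    obtain ⟨z0, hz0⟩ := hHne
    exact le_trans (norm_nonneg _) (hBg0 z0 hz0)
  -- the strengthened prox error bound
  have hrs : ∀ j : ℕ, k₀ + 1 ≤ j → j ≤ k →
      ‖v j‖ ^ 2 + 2 * ε j ≤ σ ^ 2 * ‖v j + z (j - 1) - z j‖ ^ 2 := by
    intro j h1 h2
    set Lψ : ℝ := lam * (Lf + Lg * ‖p (j - 1)‖ + ct * (Bg0 * Lg + Bg1 ^ 2)) + 1 with hLψdef
    have hX : 0 ≤ Lf + Lg * ‖p (j - 1)‖ + ct * (Bg0 * Lg + Bg1 ^ 2) := by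
      have h1' : 0 ≤ Lg * ‖p (j - 1)‖ := mul_nonneg hLg.le (norm_nonneg _)
      have h2' : 0 ≤ ct * (Bg0 * Lg + Bg1 ^ 2) :=
        mul_nonneg hct.le (add_nonneg (mul_nonneg hBg0n hLg.le) (sq_nonneg Bg1))
      linarith
    have hLψ : 1 ≤ Lψ := by
      have := mul_nonneg hlam.le hX
      rw [hLψdef]
      linarith
    have hcoef : (σ / Real.sqrt Lψ) ^ 2 ≤ σ ^ 2 := by
      rw [div_pow, Real.sq_sqrt (by linarith : (0:ℝ) ≤ Lψ)]
      exact div_le_self (sq_nonneg σ) hLψ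
    have hineq := hvineq j h1 h2
    have hmul := mul_le_mul_of_nonneg_right hcoef
      (by positivity : (0:ℝ) ≤ ‖v j + z (j - 1) - z j‖ ^ 2)
    calc ‖v j‖ ^ 2 + 2 * ε j ≤ _ := hineq
    _ ≤ σ ^ 2 * ‖v j + z (j - 1) - z j‖ ^ 2 := hmul
  -- the ε-subdifferential inequality, unfolded
  have hsubdiff : ∀ j : ℕ, k₀ + 1 ≤ j → j ≤ k → ∀ u ∈ H,
      lam * AugLag K f h g ct (z j) (p (j - 1)) + (1 / 2) * ‖z j - z (j - 1)‖ ^ 2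
        + ⟪v j, u - z j⟫ - ε j
      ≤ lam * AugLag K f h g ct u (p (j - 1)) + (1 / 2) * ‖u - z (j - 1)‖ ^ 2 := by
    intro j h1 h2 u hu
    exact hv j h1 h2 u hu
  -- per-step descent of the proximal subproblem
  have hP1 : ∀ j : ℕ, k₀ + 1 ≤ j → j ≤ k →
      lam * AugLag K f h g ct (z j) (p (j - 1))
        + (1 - σ ^ 2) / 2 * ‖v j + z (j - 1) - z j‖ ^ 2
      ≤ lam * AugLag K f h g ct (z (j - 1)) (p (j - 1)) := by
    intro j h1 h2
    have hz1 : z (j - 1) ∈ H := hzH (j - 1) (by omega) (by omega)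
    have hs := hsubdiff j h1 h2 (z (j - 1)) hz1
    rw [sub_self, norm_zero] at hs
    have hid : ‖v j + z (j - 1) - z j‖ ^ 2
        = ‖v j‖ ^ 2 + 2 * ⟪v j, z (j - 1) - z j⟫ + ‖z (j - 1) - z j‖ ^ 2 := by
      rw [add_sub_assoc]
      exact norm_add_sq_real _ _
    have hnr : ‖z j - z (j - 1)‖ = ‖z (j - 1) - z j‖ := norm_sub_rev _ _
    rw [hnr] at hs
    have hrj := hrs j h1 h2
    norm_num at hs
    linarith
  -- per-step descent including the multiplier update
  have hstep : ∀ j : ℕ, k₀ + 1 ≤ j → j ≤ k →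
      lam * AugLag K f h g ct (z j) (p j)
      ≤ lam * AugLag K f h g ct (z (j - 1)) (p (j - 1))
        - (1 - σ ^ 2) / 2 * ‖v j + z (j - 1) - z j‖ ^ 2 + lam * (4 * C ^ 2 / ct) := by
    intro j h1 h2
    have hpj := hp j h1 h2
    have hU1 := auglag_shift hKne hKcl hKcvx hKcone f h g hct (z j) hpj
    have hC1 : ‖p j - p (j - 1)‖ ≤ 2 * C := by
      calc ‖p j - p (j - 1)‖ ≤ ‖p j‖ + ‖p (j - 1)‖ := norm_sub_le _ _
      _ ≤ C + C := add_le_add (hpC j (by omega) h2) (hpC (j - 1) (by omega) (by omega))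
      _ = 2 * C := by ring
    have hC2 : ‖p j - p (j - 1)‖ ^ 2 ≤ 4 * C ^ 2 := by
      nlinarith [norm_nonneg (p j - p (j - 1))]
    have hdiv : ‖p j - p (j - 1)‖ ^ 2 / ct ≤ 4 * C ^ 2 / ct := by gcongr
    have hle : AugLag K f h g ct (z j) (p j)
        ≤ AugLag K f h g ct (z j) (p (j - 1)) + 4 * C ^ 2 / ct := by linarith
    have hmul := mul_le_mul_of_nonneg_left hle hlam.le
    rw [mul_add] at hmul
    have hPj := hP1 j h1 h2
    linarith
  constructor
  · -- part (i)
    by_contra hcon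
    push_neg at hcon
    have hkey : ∀ i ∈ Finset.range n,
        lam * Δ < (fun i => lam * AugLag K f h g ct (z (k₀ + 1 + i)) (p (k₀ + 1 + i))) i
          - (fun i => lam * AugLag K f h g ct (z (k₀ + 1 + i)) (p (k₀ + 1 + i))) (i + 1) := by
      intro i hi
      rw [Finset.mem_range] at hi
      have h1 : k₀ + 1 ≤ k₀ + 2 + i := by omega
      have h2 : k₀ + 2 + i ≤ k := by omega
      have hst := hstep (k₀ + 2 + i) h1 h2
      have hco := hcon (k₀ + 2 + i) (by omega) h2
      have e1 : k₀ + 2 + i - 1 = k₀ + 1 + i := by omega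
      rw [e1] at hst hco
      have e2 : k₀ + 1 + (i + 1) = k₀ + 2 + i := by omega
      show lam * Δ < lam * AugLag K f h g ct (z (k₀ + 1 + i)) (p (k₀ + 1 + i))
        - lam * AugLag K f h g ct (z (k₀ + 1 + (i + 1))) (p (k₀ + 1 + (i + 1)))
      rw [e2]
      have hBmul : (1 - σ ^ 2) / 2 * (2 * lam / (1 - σ ^ 2) * (Δ + 4 * C ^ 2 / ct))
          = lam * Δ + lam * (4 * C ^ 2 / ct) := by
        field_simp
      have hcomul := mul_lt_mul_of_pos_left hco (by positivity : (0:ℝ) < (1 - σ ^ 2) / 2)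
      rw [hBmul] at hcomul
      linarith
    have hne : (Finset.range n).Nonempty := by
      rw [Finset.nonempty_range_iff]
      omega
    have hsum := Finset.sum_lt_sum_of_nonempty hne hkey
    rw [Finset.sum_const, Finset.card_range, nsmul_eq_mul] at hsum
    have htel := Finset.sum_range_sub'
      (fun i => lam * AugLag K f h g ct (z (k₀ + 1 + i)) (p (k₀ + 1 + i))) n
    rw [htel] at hsum
    have ek : k₀ + 1 + n = k := by omega
    simp only [Nat.add_zero, ek] at hsum
    have hΔn : Δ * ((k : ℝ) - (k₀ : ℝ) - 1)
        = AugLag K f h g ct (z (k₀ + 1)) (p (k₀ + 1)) - AugLag K f h g ct (z k) (p k) := by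
      rw [hΔ]
      exact div_mul_cancel₀ _ hnpos.ne'
    have hΔn' : lam * (Δ * ((k : ℝ) - (k₀ : ℝ) - 1))
        = lam * AugLag K f h g ct (z (k₀ + 1)) (p (k₀ + 1))
          - lam * AugLag K f h g ct (z k) (p k) := by
      rw [hΔn]; ring
    rw [← hncast] at hΔn'
    linarith [hsum, hΔn']
  · -- part (ii)
    have hbdd : BddBelow ((fun u => f u + h u) '' H) := by
      have hfc : ContinuousOn f H := fun x hx => ((hfdiff x hx).continuousAt).continuousWithinAt
      have hhc : ContinuousOn h H := by
        apply LipschitzOnWith.continuousOn (K := Real.toNNReal Kh)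
        rw [lipschitzOnWith_iff_dist_le_mul]
        intro x hx y hy
        rw [Real.dist_eq, dist_eq_norm]
        calc |h x - h y| ≤ Kh * ‖x - y‖ := hhlip x hx y hy
        _ = (Real.toNNReal Kh : ℝ) * ‖x - y‖ := by rw [Real.coe_toNNReal Kh hKh.le]
      exact (hHcpt.image_of_continuousOn (hfc.add hhc)).bddBelow
    have hzkH : z k ∈ H := hzH k (by omega) le_rfl
    have hzk0H : z k₀ ∈ H := hzH k₀ le_rfl (by omega)
    have hz1H : z (k₀ + 1) ∈ H := hzH (k₀ + 1) (by omega) (by omega)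
    have hlow : sInf ((fun u => f u + h u) '' H) ≤ f (z k) + h (z k) :=
      csInf_le hbdd ⟨z k, hzkH, rfl⟩
    have hA4 : f (z k) + h (z k) - C ^ 2 / (2 * ct) ≤ AugLag K f h g ct (z k) (p k) := by
      have hal := auglag_lower (K := K) f h g hct (z k) (p k)
      have hpk : ‖p k‖ ≤ C := hpC k (by omega) le_rfl
      have hpk2 : ‖p k‖ ^ 2 ≤ C ^ 2 := by nlinarith [norm_nonneg (p k)]
      have : ‖p k‖ ^ 2 / (2 * ct) ≤ C ^ 2 / (2 * ct) := by gcongr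
      linarith
    have h11 : k₀ + 1 ≤ k₀ + 1 := le_rfl
    have h12 : k₀ + 1 ≤ k := by omega
    have e0 : k₀ + 1 - 1 = k₀ := by omega
    -- A1 : multiplier shift at step k₀+1
    have hA1 : lam * AugLag K f h g ct (z (k₀ + 1)) (p (k₀ + 1))
        ≤ lam * AugLag K f h g ct (z (k₀ + 1)) (p k₀) + lam * (4 * C ^ 2 / ct) := by
      have hpj := hp (k₀ + 1) h11 h12
      rw [e0] at hpj
      have hU1 := auglag_shift hKne hKcl hKcvx hKcone f h g hct (z (k₀ + 1)) hpj
      have hC1 : ‖p (k₀ + 1) - p k₀‖ ≤ 2 * C := by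
        calc ‖p (k₀ + 1) - p k₀‖ ≤ ‖p (k₀ + 1)‖ + ‖p k₀‖ := norm_sub_le _ _
        _ ≤ C + C := add_le_add (hpC (k₀ + 1) (by omega) h12) (hpC k₀ le_rfl (by omega))
        _ = 2 * C := by ring
      have hC2 : ‖p (k₀ + 1) - p k₀‖ ^ 2 ≤ 4 * C ^ 2 := by
        nlinarith [norm_nonneg (p (k₀ + 1) - p k₀)]
      have hdiv : ‖p (k₀ + 1) - p k₀‖ ^ 2 / ct ≤ 4 * C ^ 2 / ct := by gcongr
      have hle : AugLag K f h g ct (z (k₀ + 1)) (p (k₀ + 1))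
          ≤ AugLag K f h g ct (z (k₀ + 1)) (p k₀) + 4 * C ^ 2 / ct := by linarith
      have hmul := mul_le_mul_of_nonneg_left hle hlam.le
      rw [mul_add] at hmul
      linarith
    -- A2 : comparison with an arbitrary feasible point
    have hA2 : ∀ u ∈ H, lam * AugLag K f h g ct (z (k₀ + 1)) (p k₀)
        ≤ lam * AugLag K f h g ct u (p k₀) + Dh ^ 2 := by
      intro u hu
      have hs := hsubdiff (k₀ + 1) h11 h12 u hu
      rw [e0] at hs
      have hεn : 0 ≤ ε (k₀ + 1) := hε (k₀ + 1) h11 h12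
      have hcε : ‖v (k₀ + 1)‖ ^ 2 + 2 * ε (k₀ + 1)
          ≤ (1 / 2) * ‖v (k₀ + 1) + z k₀ - z (k₀ + 1)‖ ^ 2 := by
        have hrj := hrs (k₀ + 1) h11 h12
        rw [e0] at hrj
        have := mul_le_mul_of_nonneg_right hσ2
          (by positivity : (0:ℝ) ≤ ‖v (k₀ + 1) + z k₀ - z (k₀ + 1)‖ ^ 2)
        linarith
      have hkey := key_ineq' u (z k₀) (z (k₀ + 1)) (v (k₀ + 1)) (ε (k₀ + 1)) hεn hcε
      have hzero : ⟪v (k₀ + 1), u - z (k₀ + 1)⟫ = -⟪v (k₀ + 1), z (k₀ + 1) - u⟫ := by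
        rw [← inner_neg_right]
        congr 1
        abel
      have hDhsq : ‖u - z k₀‖ ^ 2 ≤ Dh ^ 2 := by
        have := hDh u hu (z k₀) hzk0H
        nlinarith [norm_nonneg (u - z k₀)]
      rw [hzero] at hs
      linarith
    -- A3 : the augmented Lagrangian at feasible points
    have hA3 : ∀ u, u ∈ H → g u ∈ -K → AugLag K f h g ct u (p k₀) ≤ f u + h u := by
      intro u hu hgu
      have hgu' : ct • g u ∈ -K := by
        rw [Set.mem_neg, ← smul_neg]
        exact hKcone ct hct _ (Set.mem_neg.mp hgu)
      exact auglag_feas f h g hct hgu' (p k₀)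
    -- putting it together
    have hΔn : Δ * ((k : ℝ) - (k₀ : ℝ) - 1)
        = AugLag K f h g ct (z (k₀ + 1)) (p (k₀ + 1)) - AugLag K f h g ct (z k) (p k) := by
      rw [hΔ]
      exact div_mul_cancel₀ _ hnpos.ne'
    have hmainQ : ∀ u ∈ {u | u ∈ H ∧ g u ∈ -K},
        Δ * ((k : ℝ) - (k₀ : ℝ) - 1) + sInf ((fun u => f u + h u) '' H)
          - Dh ^ 2 / lam - 9 * C ^ 2 / (2 * ct) ≤ f u + h u := by
      intro u hu
      obtain ⟨huH, hgu⟩ := hu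
      have h2 := hA2 u huH
      have h3 := hA3 u huH hgu
      have h3' := mul_le_mul_of_nonneg_left h3 hlam.le
      have h4' := mul_le_mul_of_nonneg_left hA4 hlam.le
      have hlowmul := mul_le_mul_of_nonneg_left hlow hlam.le
      -- lam * (Δ * n) ≤ lam * (f u + h u) + Dh^2 + lam * (9C²/(2ct)) - lam * sInfH
      have hch : lam * (Δ * ((k : ℝ) - (k₀ : ℝ) - 1))
          ≤ lam * (f u + h u) + Dh ^ 2 + lam * (4 * C ^ 2 / ct) + lam * (C ^ 2 / (2 * ct))
            - lam * sInf ((fun u => f u + h u) '' H) := by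
        rw [hΔn, mul_sub]
        linarith [hA1, h2, h3', h4', hlowmul]
      have hgoal : lam * (Δ * ((k : ℝ) - (k₀ : ℝ) - 1) + sInf ((fun u => f u + h u) '' H)
          - Dh ^ 2 / lam - 9 * C ^ 2 / (2 * ct)) ≤ lam * (f u + h u) := by
        have hc1 : lam * (Dh ^ 2 / lam) = Dh ^ 2 := by field_simp
        have hc2 : lam * (4 * C ^ 2 / ct) + lam * (C ^ 2 / (2 * ct))
            = lam * (9 * C ^ 2 / (2 * ct)) := by field_simp; ring
        rw [mul_sub, mul_sub, mul_add, hc1]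
        linarith
      exact le_of_mul_le_mul_left hgoal hlam
    have hQ : Δ * ((k : ℝ) - (k₀ : ℝ) - 1) + sInf ((fun u => f u + h u) '' H)
          - Dh ^ 2 / lam - 9 * C ^ 2 / (2 * ct)
        ≤ sInf ((fun u => f u + h u) '' {u | u ∈ H ∧ g u ∈ -K}) := by
      apply le_csInf (hFne.image _)
      rintro y ⟨u, hu, rfl⟩
      exact hmainQ u hu
    rw [hRφ, le_div_iff₀ hnpos]
    linarith
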